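/- In DC_{4n}, the subgroup generated by the two elements u = a^k x and v = a^m x equals the whole group DC_{4n} if and only if gcd(n, k - m) = 1. -/

import Mathlib

open QuaternionGroup

private lemma a_one_zpow' {n : ℕ} (j : ℤ) :
    (a 1 : QuaternionGroup n) ^ j = a (j : ZMod (2*n)) := by
  cases j with
  | ofNat m => simp [a_one_pow m]
  | negSucc m =>
      rw [zpow_negSucc, a_one_pow]
      show a (-((m+1 : ℕ) : ZMod (2*n))) = _
      congr 1
      push_cast
      ring

theorem dicyclic_two_order4_generate_iff (n : ℕ) (hn : 2 ≤ n) (k m : ℤ) :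
    Subgroup.closure
        ({(QuaternionGroup.a 1 : QuaternionGroup n) ^ k * QuaternionGroup.xa 0,
          (QuaternionGroup.a 1 : QuaternionGroup n) ^ m * QuaternionGroup.xa 0} :
          Set (QuaternionGroup n)) = ⊤ ↔ Int.gcd (n : ℤ) (k - m) = 1 := by
  have hn0 : (n : ℕ) ≠ 0 := by omega
  haveI : NeZero (2 * n) := ⟨by omega⟩
  have hu : (a 1 : QuaternionGroup n) ^ k * xa 0 = xa (-(k : ZMod (2*n))) := by
    rw [a_one_zpow', a_mul_xa, zero_sub]
  have hv : (a 1 : QuaternionGroup n) ^ m * xa 0 = xa (-(m : ZMod (2*n))) := by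
    rw [a_one_zpow', a_mul_xa, zero_sub]
  constructor
  · -- forward
    intro htop
    by_contra hd
    set d : ℕ := Int.gcd (n : ℤ) (k - m) with hdef
    have hd0 : 0 < d := Int.gcd_pos_iff.mpr (Or.inl (by exact_mod_cast hn0))
    have hd1 : 1 < d := by omega
    haveI : Fact (1 < d) := ⟨hd1⟩
    have hdvdn : d ∣ n := Int.natCast_dvd_natCast.mp (Int.gcd_dvd_left _ _)
    have hdvd : d ∣ 2 * n := hdvdn.mul_left 2
    let φ : ZMod (2 * n) →+* ZMod d := ZMod.castHom hdvd (ZMod d)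
    have hφn : φ (n : ZMod (2*n)) = 0 := by
      rw [map_natCast]
      exact (ZMod.natCast_eq_zero_iff n d).mpr hdvdn
    set c : ZMod d := φ (-(k : ZMod (2*n))) with hc
    let f : QuaternionGroup n → ZMod d := fun g =>
      match g with
      | a i => φ i
      | xa i => φ i - c
    have hfmul : ∀ g h : QuaternionGroup n, f g = 0 → f h = 0 → f (g * h) = 0 := by
      rintro (i | i) (j | j) hg hh <;>
        simp only [f, a_mul_a, a_mul_xa, xa_mul_a, xa_mul_xa, map_add, map_sub] at hg hh ⊢
      · linear_combination hg + hh
      · linear_combination hh - hg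
      · linear_combination hg + hh
      · linear_combination hφn + hh - hg
    have hfinv : ∀ g : QuaternionGroup n, f g = 0 → f g⁻¹ = 0 := by
      rintro (i | i) hg <;>
        simp only [f] at hg ⊢
      · show φ (-i) = 0
        simp [hg]
      · show φ ((n : ZMod (2*n)) + i) - c = 0
        rw [sub_eq_zero] at *
        simp [hg, hφn]
    let H : Subgroup (QuaternionGroup n) :=
      { carrier := {g | f g = 0}
        one_mem' := by show φ 0 = 0; simp
        mul_mem' := fun ha hb => hfmul _ _ ha hb
        inv_mem' := fun ha => hfinv _ ha }
    have hkm : φ (((k - m : ℤ) : ZMod (2*n))) = 0 := by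
      rw [map_intCast]
      exact (ZMod.intCast_zmod_eq_zero_iff_dvd _ d).mpr (Int.gcd_dvd_right _ _)
    have hsub : Subgroup.closure
        ({(a 1 : QuaternionGroup n) ^ k * xa 0, (a 1 : QuaternionGroup n) ^ m * xa 0} :
          Set (QuaternionGroup n)) ≤ H := by
      rw [Subgroup.closure_le]
      rintro g (rfl | rfl)
      · show f _ = 0
        rw [hu]
        show φ (-(k:ZMod (2*n))) - c = 0
        rw [hc, sub_self]
      · show f _ = 0
        rw [hv]
        show φ (-(m:ZMod (2*n))) - c = 0
        rw [hc, sub_eq_zero]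
        have : ((k - m : ℤ) : ZMod (2*n)) = -(m : ZMod (2*n)) - (-(k : ZMod (2*n))) := by
          push_cast; ring
        rw [this, map_sub, sub_eq_zero] at hkm
        exact hkm
    rw [htop] at hsub
    have : (a 1 : QuaternionGroup n) ∈ H := hsub (Subgroup.mem_top _)
    have h1 : φ 1 = 0 := this
    rw [map_one] at h1
    exact one_ne_zero h1
  · -- backward
    intro hgcd
    set u := (a 1 : QuaternionGroup n) ^ k * xa 0 with hudef
    set v := (a 1 : QuaternionGroup n) ^ m * xa 0 with hvdef
    set S := ({u, v} : Set (QuaternionGroup n)) with hS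
    have hum : u ∈ Subgroup.closure S := Subgroup.subset_closure (by left; rfl)
    have hvm : v ∈ Subgroup.closure S := Subgroup.subset_closure (by right; rfl)
    have husq : u ^ 2 = (a 1 : QuaternionGroup n) ^ (n : ℤ) := by
      rw [hu, xa_sq, a_one_zpow']
      norm_cast
    have huv : u * v⁻¹ = (a 1 : QuaternionGroup n) ^ (k - m) := by
      rw [hu, hv, a_one_zpow']
      show xa _ * xa ((n : ZMod (2*n)) + -(m : ZMod (2*n))) = _
      rw [xa_mul_xa]
      congr 1
      have h2n : ((2 * n : ℕ) : ZMod (2*n)) = 0 := ZMod.natCast_self _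
      push_cast at h2n ⊢
      linear_combination h2n
    have ha1 : (a 1 : QuaternionGroup n) ∈ Subgroup.closure S := by
      obtain ⟨A, B, hAB⟩ : ∃ A B : ℤ, (n : ℤ) * A + (k - m) * B = 1 := by
        refine ⟨Int.gcdA (n : ℤ) (k - m), Int.gcdB (n : ℤ) (k - m), ?_⟩
        have := Int.gcd_eq_gcd_ab (n : ℤ) (k - m)
        rw [hgcd] at this
        push_cast at this
        linarith
      have : (a 1 : QuaternionGroup n) = (u ^ 2) ^ A * (u * v⁻¹) ^ B := by
        rw [husq, huv, ← zpow_mul, ← zpow_mul, ← zpow_add, hAB, zpow_one]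
      rw [this]
      exact mul_mem (zpow_mem (pow_mem hum 2) A) (zpow_mem (mul_mem hum (inv_mem hvm)) B)
    rw [eq_top_iff]
    rintro (i | i) -
    · have : (a i : QuaternionGroup n) = (a 1) ^ (i.val) := by
        rw [a_one_pow, ZMod.natCast_val, ZMod.cast_id]
      rw [this]
      exact pow_mem ha1 _
    · have : (xa i : QuaternionGroup n) = a (-(k : ZMod (2*n)) - i) * u := by
        rw [hu, a_mul_xa]
        congr 1
        ring
      rw [this]
      exact mul_mem (by
        have : (a (-(k : ZMod (2*n)) - i) : QuaternionGroup n)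
            = (a 1) ^ ((-(k : ZMod (2*n)) - i).val) := by
          rw [a_one_pow, ZMod.natCast_val, ZMod.cast_id]
        rw [this]; exact pow_mem ha1 _) hum
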